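/- Let û and v̂ be Fourier-side mild solutions of the Navier–Stokes system with data (û₀, F̂) and (v̂₀, Ĝ) respectively, satisfying sup_{t≥0} ess sup_ξ |ξ|² |û(ξ,t)| < ∞ and sup_{t≥0} ess sup_ξ |ξ|² |v̂(ξ,t)| < ∞. If lim_{t→∞} ess sup_ξ |ξ|² |û(ξ,t) − v̂(ξ,t)| = 0, then lim_{t→∞} ess sup_ξ |ξ|² | e^{−t|ξ|²}(û₀(ξ) − v̂₀(ξ)) + ∫₀ᵗ e^{−(t−τ)|ξ|²} P̂(ξ)( F̂(ξ,τ) − Ĝ(ξ,τ) ) dτ | = 0. -/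

import Mathlib

open MeasureTheory Filter
open scoped ENNReal

noncomputable section

abbrev E3 : Type := EuclideanSpace ℝ (Fin 3)
abbrev V3 : Type := Fin 3 → ℂ

/-- The `PM^a` norm (on the Fourier side): `ess sup_ξ |ξ|^a |g(ξ)|`, valued in `ℝ≥0∞`. -/
def PMnorm (a : ℝ) (g : E3 → V3) : ℝ≥0∞ :=
  essSup (fun ξ : E3 => ENNReal.ofReal (‖ξ‖ ^ a * ‖g ξ‖)) volume

/-- The symbol `P̂(ξ)_{jk} = δ_{jk} − ξ_j ξ_k / |ξ|²` of the Leray projector. -/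
def LerayP (ξ : E3) : Matrix (Fin 3) (Fin 3) ℂ :=
  fun j k => (if j = k then (1 : ℂ) else 0) - ((ξ j : ℂ) * (ξ k : ℂ)) / ((‖ξ‖ : ℂ) ^ 2)

/-- The matrix-valued convolution
`Ŵ[v,w](ξ)_{jk} = (2π)^{-3/2} ∫ v_j(ξ−z) w_k(z) dz`
(the Fourier transform of the tensor product `v ⊗ w`). -/
def Wconv (v w : E3 → V3) (ξ : E3) : Matrix (Fin 3) (Fin 3) ℂ :=
  fun j k => (((2 * Real.pi) ^ ((3 : ℝ) / 2))⁻¹ : ℝ) • ∫ z : E3, v (ξ - z) j * w z k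

/-- The vector `iξ·Ŵ[v,w](ξ)`, with components `Σ_k iξ_k Ŵ[v,w](ξ)_{jk}`. -/
def ixW (v w : E3 → V3) (ξ : E3) : V3 :=
  fun j => ∑ k : Fin 3, Complex.I * (ξ k : ℂ) * Wconv v w ξ j k

/-- The Fourier side of the Navier–Stokes bilinear Duhamel term
`B(u,v)(t) = −∫₀ᵗ S(t−τ) P ∇·(u⊗v) dτ` (up to sign):
`∫₀ᵗ e^{−(t−τ)|ξ|²} P̂(ξ)( iξ·Ŵ[û(τ),v̂(τ)](ξ) ) dτ`. -/
def Bterm (u v : E3 → ℝ → V3) (ξ : E3) (t : ℝ) : V3 :=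
  ∫ τ in (0 : ℝ)..t, Real.exp (-(t - τ) * ‖ξ‖ ^ 2) •
    (LerayP ξ).mulVec (ixW (fun ζ => u ζ τ) (fun ζ => v ζ τ) ξ)

/-- The Fourier side of the Duhamel force term `∫₀ᵗ S(t−τ) P F(τ) dτ`. -/
def Fterm (F : E3 → ℝ → V3) (ξ : E3) (t : ℝ) : V3 :=
  ∫ τ in (0 : ℝ)..t, Real.exp (-(t - τ) * ‖ξ‖ ^ 2) • (LerayP ξ).mulVec (F ξ τ)

/-- `sup_{t ≥ 0} ‖u(t)‖_{PM^a}`. -/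
def supPM (a : ℝ) (u : E3 → ℝ → V3) : ℝ≥0∞ :=
  ⨆ (t : ℝ) (_ : 0 ≤ t), PMnorm a (fun ξ => u ξ t)

/-- A Fourier-side mild solution of the Navier–Stokes system with data `(û₀, F̂)`:
`û` is jointly measurable, all integrals converge absolutely, and for every `t ≥ 0`
and a.e. `ξ`,
`û(ξ,t) = e^{−t|ξ|²} û₀(ξ) − ∫₀ᵗ e^{−(t−τ)|ξ|²} P̂(ξ)(iξ·Ŵ[û(τ),û(τ)](ξ)) dτ
 + ∫₀ᵗ e^{−(t−τ)|ξ|²} P̂(ξ) F̂(ξ,τ) dτ`. -/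
def IsMildSolution (u0 : E3 → V3) (F : E3 → ℝ → V3) (u : E3 → ℝ → V3) : Prop :=
  Measurable (fun p : E3 × ℝ => u p.1 p.2) ∧
  ∀ t : ℝ, 0 ≤ t → ∀ᵐ ξ : E3,
    (∀ τ ∈ Set.Icc (0 : ℝ) t, ∀ j k : Fin 3,
        Integrable (fun z : E3 => u (ξ - z) τ j * u z τ k)) ∧
    IntervalIntegrable (fun τ : ℝ =>
        Real.exp (-(t - τ) * ‖ξ‖ ^ 2) •
          (LerayP ξ).mulVec (ixW (fun ζ => u ζ τ) (fun ζ => u ζ τ) ξ)) volume 0 t ∧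
    IntervalIntegrable (fun τ : ℝ =>
        Real.exp (-(t - τ) * ‖ξ‖ ^ 2) • (LerayP ξ).mulVec (F ξ τ)) volume 0 t ∧
    u ξ t = Real.exp (-t * ‖ξ‖ ^ 2) • u0 ξ - Bterm u u ξ t + Fterm F ξ t

/-- `η` is a constant for which the `PM²` bilinear estimate holds:
`‖B(u,v)(t)‖_{PM²} ≤ η (sup_τ ‖u(τ)‖_{PM²})(sup_τ ‖v(τ)‖_{PM²})`. -/
def BilinearEstimate (η : ℝ) : Prop :=
  ∀ u v : E3 → ℝ → V3,
    Measurable (fun p : E3 × ℝ => u p.1 p.2) →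
    Measurable (fun p : E3 × ℝ => v p.1 p.2) →
    ∀ t : ℝ, 0 ≤ t →
      PMnorm 2 (fun ξ => Bterm u v ξ t) ≤ ENNReal.ofReal η * supPM 2 u * supPM 2 v

section aux
open Metric

def vB : ℝ := (volume (ball (0:E3) 1)).toReal
lemma vB_nonneg : 0 ≤ vB := ENNReal.toReal_nonneg
lemma vol_ball3 (R : ℝ) (hR : 0 ≤ R) :
    volume (ball (0:E3) R) = ENNReal.ofReal (R ^ 3 * vB) := by
  rw [Measure.addHaar_ball _ _ hR, finrank_euclideanSpace_fin, vB,
    ENNReal.ofReal_mul (by positivity), ENNReal.ofReal_toReal measure_ball_lt_top.ne]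
lemma vol_closedBall3 (R : ℝ) (hR : 0 ≤ R) :
    volume (closedBall (0:E3) R) = ENNReal.ofReal (R ^ 3 * vB) := by
  rw [Measure.addHaar_closedBall _ _ hR, finrank_euclideanSpace_fin, vB,
    ENNReal.ofReal_mul (by positivity), ENNReal.ofReal_toReal measure_ball_lt_top.ne]

lemma half_geom : ∑' n : ℕ, (ENNReal.ofReal (1/2)) ^ n = 2 := by
  have : ENNReal.ofReal (1/2) = 2⁻¹ := by
    rw [show (1/2 : ℝ) = 2⁻¹ by norm_num, ENNReal.ofReal_inv_of_pos (by norm_num)]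
    norm_num
  rw [this, ENNReal.tsum_geometric]
  simp [ENNReal.one_sub_inv_two]

lemma fact1 (R : ℝ) (hR : 0 < R) :
    ∫⁻ z in ball (0:E3) R, ENNReal.ofReal ((‖z‖^2)⁻¹) ≤ ENNReal.ofReal (8 * vB * R) := by
  set S : ℕ → Set E3 := fun n => {z | R/2^(n+1) ≤ ‖z‖} ∩ ball 0 (R/2^n) with hS
  have hcover : ball (0:E3) R ⊆ {0} ∪ ⋃ n, S n := by
    intro z hz
    rcases eq_or_ne z 0 with rfl | h0
    · exact Or.inl rfl
    right
    have hz' : 0 < ‖z‖ := norm_pos_iff.2 h0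
    have hex : ∃ n : ℕ, R/2^(n+1) ≤ ‖z‖ := by
      obtain ⟨n, hn⟩ := exists_pow_lt_of_lt_one (div_pos hz' hR) (by norm_num : (1/2:ℝ) < 1)
      refine ⟨n, ?_⟩
      have h1 : R/2^(n+1) ≤ R / 2^n :=
        div_le_div_of_nonneg_left hR.le (by positivity)
          (pow_le_pow_right₀ (by norm_num) (by omega))
      have h2 : R / 2^n = R * (1/2)^n := by rw [div_pow, one_pow]; ring
      refine le_of_lt ?_
      calc R/2^(n+1) ≤ R * (1/2)^n := h2 ▸ h1
        _ < R * (‖z‖/R) := mul_lt_mul_of_pos_left hn hR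
        _ = ‖z‖ := by field_simp
    set n0 := Nat.find hex with hn0
    refine Set.mem_iUnion.2 ⟨n0, ⟨Nat.find_spec hex, ?_⟩⟩
    rw [mem_ball_zero_iff]
    rcases Nat.eq_zero_or_pos n0 with h | h
    · rw [h]; simpa using (mem_ball_zero_iff.1 hz)
    · have := Nat.find_min hex (show n0 - 1 < n0 by omega)
      push_neg at this
      have : ‖z‖ < R / 2 ^ (n0 - 1 + 1) := this
      rwa [show n0 - 1 + 1 = n0 by omega] at this
  have hmeas : ∀ n, MeasurableSet (S n) :=
    fun n => (measurableSet_le measurable_const measurable_norm).inter measurableSet_ball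
  calc ∫⁻ z in ball (0:E3) R, ENNReal.ofReal ((‖z‖^2)⁻¹)
      ≤ ∫⁻ z in ({0} ∪ ⋃ n, S n : Set E3), ENNReal.ofReal ((‖z‖^2)⁻¹) :=
        lintegral_mono_set hcover
    _ ≤ (∫⁻ z in ({0} : Set E3), ENNReal.ofReal ((‖z‖^2)⁻¹)) +
        ∫⁻ z in (⋃ n, S n), ENNReal.ofReal ((‖z‖^2)⁻¹) := lintegral_union_le _ _ _
    _ ≤ 0 + ∑' n, ∫⁻ z in S n, ENNReal.ofReal ((‖z‖^2)⁻¹) := by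
        gcongr
        · rw [setLIntegral_measure_zero _ _ (measure_singleton _)]
        · exact lintegral_iUnion_le _ _
    _ ≤ ∑' n : ℕ, ENNReal.ofReal (4 * vB * R) * (ENNReal.ofReal (1/2))^n := by
        rw [zero_add]
        refine ENNReal.tsum_le_tsum fun n => ?_
        have hb : ∀ z ∈ S n, ENNReal.ofReal ((‖z‖^2)⁻¹)
            ≤ ENNReal.ofReal (((R/2^(n+1))^2)⁻¹) := by
          intro z hz
          refine ENNReal.ofReal_le_ofReal ?_
          have h1 : R/2^(n+1) ≤ ‖z‖ := hz.1
          have h2 : 0 < R/2^(n+1) := by positivity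
          exact inv_anti₀ (by positivity) (by nlinarith)
        calc ∫⁻ z in S n, ENNReal.ofReal ((‖z‖^2)⁻¹)
            ≤ ∫⁻ _ in S n, ENNReal.ofReal (((R/2^(n+1))^2)⁻¹) :=
              setLIntegral_mono measurable_const hb
          _ = ENNReal.ofReal (((R/2^(n+1))^2)⁻¹) * volume (S n) := setLIntegral_const _ _
          _ ≤ ENNReal.ofReal (((R/2^(n+1))^2)⁻¹) * volume (ball (0:E3) (R/2^n)) := by
              gcongr
              exact Set.inter_subset_right
          _ = ENNReal.ofReal (((R/2^(n+1))^2)⁻¹ * ((R/2^n)^3 * vB)) := by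
              rw [vol_ball3 _ (by positivity), ← ENNReal.ofReal_mul (by positivity)]
          _ ≤ ENNReal.ofReal (4 * vB * R) * (ENNReal.ofReal (1/2))^n := by
              rw [← ENNReal.ofReal_pow (by norm_num), ← ENNReal.ofReal_mul
                (mul_nonneg (mul_nonneg (by norm_num) vB_nonneg) hR.le)]
              refine ENNReal.ofReal_le_ofReal (le_of_eq ?_)
              rw [one_div_pow]
              field_simp
              ring
    _ = ENNReal.ofReal (4 * vB * R) * 2 := by rw [ENNReal.tsum_mul_left, half_geom]
    _ ≤ ENNReal.ofReal (8 * vB * R) := by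
        rw [show (8:ℝ) * vB * R = (4 * vB * R) * 2 by ring,
          ENNReal.ofReal_mul (mul_nonneg (mul_nonneg (by norm_num) vB_nonneg) hR.le),
          ENNReal.ofReal_ofNat]

lemma fact2 (R : ℝ) (hR : 0 < R) :
    ∫⁻ z in {z : E3 | R < ‖z‖}, ENNReal.ofReal ((‖z‖^2 * ‖z‖^2)⁻¹)
      ≤ ENNReal.ofReal (16 * vB / R) := by
  set S : ℕ → Set E3 := fun n => {z | 2^n * R < ‖z‖} ∩ closedBall 0 (2^(n+1) * R) with hS
  have hcover : {z : E3 | R < ‖z‖} ⊆ ⋃ n, S n := by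
    intro z hz
    have hz0 : R < ‖z‖ := hz
    have hex : ∃ n : ℕ, ‖z‖ ≤ 2^(n+1) * R := by
      obtain ⟨n, hn⟩ := pow_unbounded_of_one_lt (‖z‖ / R) (by norm_num : (1:ℝ) < 2)
      rw [div_lt_iff₀ hR] at hn
      have hpow : (2:ℝ)^n ≤ 2^(n+1) := pow_le_pow_right₀ (by norm_num) (by omega)
      exact ⟨n, by nlinarith⟩
    refine Set.mem_iUnion.2 ⟨Nat.find hex, ⟨?_, by
      simpa [dist_eq_norm] using Nat.find_spec hex⟩⟩
    rcases Nat.eq_zero_or_pos (Nat.find hex) with h | h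
    · rw [h]; simpa using hz0
    · have := Nat.find_min hex (show Nat.find hex - 1 < Nat.find hex by omega)
      push_neg at this
      have h2 : 2 ^ (Nat.find hex - 1 + 1) * R < ‖z‖ := this
      rwa [show Nat.find hex - 1 + 1 = Nat.find hex by omega] at h2
  calc ∫⁻ z in {z : E3 | R < ‖z‖}, ENNReal.ofReal ((‖z‖^2 * ‖z‖^2)⁻¹)
      ≤ ∫⁻ z in (⋃ n, S n), ENNReal.ofReal ((‖z‖^2 * ‖z‖^2)⁻¹) := lintegral_mono_set hcover
    _ ≤ ∑' n, ∫⁻ z in S n, ENNReal.ofReal ((‖z‖^2 * ‖z‖^2)⁻¹) := lintegral_iUnion_le _ _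
    _ ≤ ∑' n : ℕ, ENNReal.ofReal (8 * vB / R) * (ENNReal.ofReal (1/2))^n := by
        refine ENNReal.tsum_le_tsum fun n => ?_
        have hrn : (0:ℝ) < 2^n * R := by positivity
        have hb : ∀ z ∈ S n, ENNReal.ofReal ((‖z‖^2 * ‖z‖^2)⁻¹)
            ≤ ENNReal.ofReal ((((2^n*R)^2 * (2^n*R)^2))⁻¹) := by
          intro z hz
          have h1 : 2^n * R < ‖z‖ := hz.1
          have h2 : (2^n*R)^2 ≤ ‖z‖^2 := by nlinarith
          exact ENNReal.ofReal_le_ofReal (inv_anti₀ (by positivity)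
            (by nlinarith [sq_nonneg (‖z‖ + 2^n*R)]))
        calc ∫⁻ z in S n, ENNReal.ofReal ((‖z‖^2 * ‖z‖^2)⁻¹)
            ≤ ∫⁻ _ in S n, ENNReal.ofReal ((((2^n*R)^2 * (2^n*R)^2))⁻¹) :=
              setLIntegral_mono measurable_const hb
          _ = ENNReal.ofReal ((((2^n*R)^2 * (2^n*R)^2))⁻¹) * volume (S n) :=
              setLIntegral_const _ _
          _ ≤ ENNReal.ofReal ((((2^n*R)^2 * (2^n*R)^2))⁻¹) *
              volume (closedBall (0:E3) (2^(n+1) * R)) := by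
              gcongr
              exact Set.inter_subset_right
          _ = ENNReal.ofReal ((((2^n*R)^2 * (2^n*R)^2))⁻¹ * ((2^(n+1)*R)^3 * vB)) := by
              rw [vol_closedBall3 _ (by positivity), ← ENNReal.ofReal_mul (by positivity)]
          _ ≤ ENNReal.ofReal (8 * vB / R) * (ENNReal.ofReal (1/2))^n := by
              rw [← ENNReal.ofReal_pow (by norm_num), ← ENNReal.ofReal_mul
                (div_nonneg (mul_nonneg (by norm_num) vB_nonneg) hR.le)]
              refine ENNReal.ofReal_le_ofReal (le_of_eq ?_)
              rw [one_div_pow]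
              field_simp
              ring
    _ = ENNReal.ofReal (8 * vB / R) * 2 := by rw [ENNReal.tsum_mul_left, half_geom]
    _ ≤ ENNReal.ofReal (16 * vB / R) := by
        rw [show (16:ℝ) * vB / R = (8 * vB / R) * 2 by ring,
          ENNReal.ofReal_mul (div_nonneg (mul_nonneg (by norm_num) vB_nonneg) hR.le),
          ENNReal.ofReal_ofNat]

lemma ofReal_indicator_fun (s : Set E3) (φ : E3 → ℝ) :
    (fun z => ENNReal.ofReal (s.indicator φ z)) =
      s.indicator (fun z => ENNReal.ofReal (φ z)) := by
  funext z
  by_cases h : z ∈ s <;> simp [Set.indicator_apply, h]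

def CR : ℝ := 192 * vB

lemma CR_nonneg : 0 ≤ CR := mul_nonneg (by norm_num) vB_nonneg

set_option maxHeartbeats 1000000 in
lemma riesz (ξ : E3) (hξ : ξ ≠ 0) :
    ∫⁻ z : E3, ENNReal.ofReal ((‖ξ - z‖^2)⁻¹ * (‖z‖^2)⁻¹)
      ≤ ENNReal.ofReal (CR / ‖ξ‖) := by
  set r := ‖ξ‖ with hr
  have hr0 : 0 < r := norm_pos_iff.2 hξ
  set φA : E3 → ℝ := fun z => ((r/2)^2)⁻¹ * (‖z‖^2)⁻¹ with hφA
  set φB : E3 → ℝ := fun z => ((r/2)^2)⁻¹ * (‖ξ - z‖^2)⁻¹ with hφB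
  set hA := (ball (0:E3) (r/2)).indicator φA with hhA
  set hB := (ball ξ (r/2)).indicator φB with hhB
  set hC := (closedBall (0:E3) (2*r)).indicator
    (fun _ => (((r/2)^2)*((r/2)^2))⁻¹) with hhC
  set hD := ({z : E3 | 2*r < ‖z‖}).indicator
    (fun z => 4 * (‖z‖^2 * ‖z‖^2)⁻¹) with hhD
  have hpt : ∀ z : E3, (‖ξ - z‖^2)⁻¹ * (‖z‖^2)⁻¹ ≤ hA z + hB z + hC z + hD z := by
    intro z
    have hA0 : 0 ≤ hA z := Set.indicator_nonneg (fun x _ => by positivity) z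
    have hB0 : 0 ≤ hB z := Set.indicator_nonneg (fun x _ => by positivity) z
    have hC0 : 0 ≤ hC z := Set.indicator_nonneg (fun x _ => by positivity) z
    have hD0 : 0 ≤ hD z := Set.indicator_nonneg (fun x _ => by positivity) z
    by_cases h1 : ‖z‖ < r/2
    · -- z in ball 0 (r/2); ‖ξ - z‖ ≥ r/2
      have hlow : r/2 ≤ ‖ξ - z‖ := by
        have := norm_sub_norm_le ξ z
        linarith [abs_le.1 (abs_norm_sub_norm_le ξ z)]
      have hle : (‖ξ - z‖^2)⁻¹ * (‖z‖^2)⁻¹ ≤ hA z := by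
        rw [hhA, Set.indicator_of_mem (by rwa [mem_ball_zero_iff])]
        have : (‖ξ - z‖^2)⁻¹ ≤ ((r/2)^2)⁻¹ :=
          inv_anti₀ (by positivity) (by nlinarith)
        exact mul_le_mul_of_nonneg_right this (by positivity)
      linarith
    · by_cases h2 : ‖ξ - z‖ < r/2
      · have hlow : r/2 ≤ ‖z‖ := le_of_not_gt h1
        have hle : (‖ξ - z‖^2)⁻¹ * (‖z‖^2)⁻¹ ≤ hB z := by
          rw [hhB, Set.indicator_of_mem (by rw [mem_ball]; rwa [dist_eq_norm, ← norm_neg, neg_sub])]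
          have hb2 : (‖z‖^2)⁻¹ ≤ ((r/2)^2)⁻¹ :=
            inv_anti₀ (by positivity) (by nlinarith)
          calc (‖ξ - z‖^2)⁻¹ * (‖z‖^2)⁻¹ = (‖z‖^2)⁻¹ * (‖ξ - z‖^2)⁻¹ := mul_comm _ _
            _ ≤ ((r/2)^2)⁻¹ * (‖ξ - z‖^2)⁻¹ :=
                mul_le_mul_of_nonneg_right hb2 (by positivity)
        linarith
      · have hz1 : r/2 ≤ ‖z‖ := le_of_not_gt h1
        have hz2 : r/2 ≤ ‖ξ - z‖ := le_of_not_gt h2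
        by_cases h3 : ‖z‖ ≤ 2*r
        · have hle : (‖ξ - z‖^2)⁻¹ * (‖z‖^2)⁻¹ ≤ hC z := by
            rw [hhC, Set.indicator_of_mem (by rwa [mem_closedBall_zero_iff])]
            rw [mul_inv]
            exact mul_le_mul (inv_anti₀ (by positivity) (by nlinarith))
              (inv_anti₀ (by positivity) (by nlinarith)) (by positivity) (by positivity)
          linarith
        · push_neg at h3
          have hlow : ‖z‖/2 ≤ ‖ξ - z‖ := by
            have := norm_sub_norm_le z ξ
            have h4 : ‖z - ξ‖ = ‖ξ - z‖ := by rw [← norm_neg, neg_sub]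
            linarith
          have hle : (‖ξ - z‖^2)⁻¹ * (‖z‖^2)⁻¹ ≤ hD z := by
            rw [hhD, Set.indicator_of_mem (by exact h3)]
            have hz0 : 0 < ‖z‖ := lt_trans (by positivity) h3
            have : (‖ξ - z‖^2)⁻¹ ≤ 4 * (‖z‖^2)⁻¹ := by
              rw [show (4:ℝ) * (‖z‖^2)⁻¹ = ((‖z‖/2)^2)⁻¹ by
                rw [div_pow, inv_div, div_eq_mul_inv]; norm_num]
              exact inv_anti₀ (by positivity) (by nlinarith)
            calc (‖ξ - z‖^2)⁻¹ * (‖z‖^2)⁻¹ ≤ (4 * (‖z‖^2)⁻¹) * (‖z‖^2)⁻¹ :=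
                  mul_le_mul_of_nonneg_right this (by positivity)
              _ = 4 * (‖z‖^2 * ‖z‖^2)⁻¹ := by rw [mul_inv]; ring
          linarith
  -- measurability
  have mφA : Measurable fun z : E3 => ENNReal.ofReal (φA z) :=
    (((measurable_norm.pow_const 2).inv).const_mul _).ennreal_ofReal
  have mφB : Measurable fun z : E3 => ENNReal.ofReal (φB z) := by
    have : Measurable fun z : E3 => ξ - z := measurable_const.sub measurable_id
    exact ((((measurable_norm.comp this).pow_const 2).inv).const_mul _).ennreal_ofReal
  have msA : MeasurableSet (ball (0:E3) (r/2)) := measurableSet_ball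
  have msB : MeasurableSet (ball ξ (r/2)) := measurableSet_ball
  have msC : MeasurableSet (closedBall (0:E3) (2*r)) := measurableSet_closedBall
  have msD : MeasurableSet {z : E3 | 2*r < ‖z‖} :=
    measurableSet_lt measurable_const measurable_norm
  have mgA : Measurable fun z => ENNReal.ofReal (hA z) := by
    rw [hhA, ofReal_indicator_fun]; exact mφA.indicator msA
  have mgB : Measurable fun z => ENNReal.ofReal (hB z) := by
    rw [hhB, ofReal_indicator_fun]; exact mφB.indicator msB
  have mgC : Measurable fun z => ENNReal.ofReal (hC z) := by
    rw [hhC, ofReal_indicator_fun]; exact measurable_const.ennreal_ofReal.indicator msC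
  have mgD : Measurable fun z => ENNReal.ofReal (hD z) := by
    rw [hhD, ofReal_indicator_fun]
    exact ((((measurable_norm.pow_const 2).mul (measurable_norm.pow_const 2)).inv.const_mul
      _).ennreal_ofReal).indicator msD
  have key : ∫⁻ z : E3, ENNReal.ofReal ((‖ξ - z‖^2)⁻¹ * (‖z‖^2)⁻¹)
      ≤ (∫⁻ z, ENNReal.ofReal (hA z)) + (∫⁻ z, ENNReal.ofReal (hB z)) +
        (∫⁻ z, ENNReal.ofReal (hC z)) + (∫⁻ z, ENNReal.ofReal (hD z)) := by
    calc ∫⁻ z : E3, ENNReal.ofReal ((‖ξ - z‖^2)⁻¹ * (‖z‖^2)⁻¹)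
        ≤ ∫⁻ z, (ENNReal.ofReal (hA z) + ENNReal.ofReal (hB z) +
            ENNReal.ofReal (hC z) + ENNReal.ofReal (hD z)) := by
          refine lintegral_mono fun z => ?_
          calc ENNReal.ofReal ((‖ξ - z‖^2)⁻¹ * (‖z‖^2)⁻¹)
              ≤ ENNReal.ofReal (hA z + hB z + hC z + hD z) :=
                ENNReal.ofReal_le_ofReal (hpt z)
            _ ≤ ENNReal.ofReal (hA z + hB z + hC z) + ENNReal.ofReal (hD z) :=
                ENNReal.ofReal_add_le
            _ ≤ ENNReal.ofReal (hA z + hB z) + ENNReal.ofReal (hC z) +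
                ENNReal.ofReal (hD z) := add_le_add ENNReal.ofReal_add_le le_rfl
            _ ≤ ENNReal.ofReal (hA z) + ENNReal.ofReal (hB z) + ENNReal.ofReal (hC z) +
                ENNReal.ofReal (hD z) := by
                exact add_le_add (add_le_add ENNReal.ofReal_add_le le_rfl) le_rfl
      _ = _ := by
          rw [lintegral_add_right _ mgD, lintegral_add_right _ mgC,
            lintegral_add_right _ mgB]
  have bound0 : (∫⁻ z, ENNReal.ofReal (hA z)) ≤ ENNReal.ofReal (16 * vB / r) := by
    rw [hhA, ofReal_indicator_fun, lintegral_indicator msA]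
    calc ∫⁻ z in ball (0:E3) (r/2), ENNReal.ofReal (φA z)
        = ∫⁻ z in ball (0:E3) (r/2),
            ENNReal.ofReal (((r/2)^2)⁻¹) * ENNReal.ofReal ((‖z‖^2)⁻¹) := by
          simp_rw [hφA, ENNReal.ofReal_mul (by positivity : (0:ℝ) ≤ ((r/2)^2)⁻¹)]
      _ = ENNReal.ofReal (((r/2)^2)⁻¹) *
            ∫⁻ z in ball (0:E3) (r/2), ENNReal.ofReal ((‖z‖^2)⁻¹) :=
          lintegral_const_mul' _ _ ENNReal.ofReal_ne_top
      _ ≤ ENNReal.ofReal (((r/2)^2)⁻¹) * ENNReal.ofReal (8 * vB * (r/2)) := by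
          gcongr
          exact fact1 _ (by positivity)
      _ = ENNReal.ofReal (((r/2)^2)⁻¹ * (8 * vB * (r/2))) :=
          (ENNReal.ofReal_mul (by positivity)).symm
      _ ≤ ENNReal.ofReal (16 * vB / r) :=
          ENNReal.ofReal_le_ofReal (le_of_eq (by field_simp; ring))
  have boundB : (∫⁻ z, ENNReal.ofReal (hB z)) ≤ ENNReal.ofReal (16 * vB / r) := by
    have hmemiff : ∀ z : E3, z ∈ ball ξ (r/2) ↔ ξ - z ∈ ball (0:E3) (r/2) := by
      intro z
      simp [mem_ball, mem_ball_zero_iff, dist_eq_norm, norm_sub_rev]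
    have hcomp : (fun z => ENNReal.ofReal (hB z)) = fun z => ENNReal.ofReal (hA (ξ - z)) := by
      funext z
      rw [hhA, hhB]
      by_cases h : z ∈ ball ξ (r/2)
      · rw [Set.indicator_of_mem h, Set.indicator_of_mem ((hmemiff z).1 h)]
      · rw [Set.indicator_of_notMem h,
          Set.indicator_of_notMem (fun hc => h ((hmemiff z).2 hc))]
    rw [hcomp, (Measure.measurePreserving_sub_left volume ξ).lintegral_comp mgA]
    exact bound0
  have boundC : (∫⁻ z, ENNReal.ofReal (hC z)) ≤ ENNReal.ofReal (128 * vB / r) := by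
    rw [hhC, ofReal_indicator_fun, lintegral_indicator msC, setLIntegral_const,
      vol_closedBall3 _ (by positivity),
      ← ENNReal.ofReal_mul (by positivity)]
    refine ENNReal.ofReal_le_ofReal (le_of_eq ?_)
    field_simp
    ring
  have boundD : (∫⁻ z, ENNReal.ofReal (hD z)) ≤ ENNReal.ofReal (32 * vB / r) := by
    rw [hhD, ofReal_indicator_fun, lintegral_indicator msD]
    calc ∫⁻ z in {z : E3 | 2*r < ‖z‖}, ENNReal.ofReal (4 * (‖z‖^2 * ‖z‖^2)⁻¹)
        = ∫⁻ z in {z : E3 | 2*r < ‖z‖},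
            ENNReal.ofReal 4 * ENNReal.ofReal ((‖z‖^2 * ‖z‖^2)⁻¹) := by
          simp_rw [ENNReal.ofReal_mul (by norm_num : (0:ℝ) ≤ 4)]
      _ = ENNReal.ofReal 4 *
            ∫⁻ z in {z : E3 | 2*r < ‖z‖}, ENNReal.ofReal ((‖z‖^2 * ‖z‖^2)⁻¹) :=
          lintegral_const_mul' _ _ ENNReal.ofReal_ne_top
      _ ≤ ENNReal.ofReal 4 * ENNReal.ofReal (16 * vB / (2*r)) := by
          gcongr
          exact fact2 _ (by positivity)
      _ = ENNReal.ofReal (4 * (16 * vB / (2*r))) := (ENNReal.ofReal_mul (by norm_num)).symm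
      _ ≤ ENNReal.ofReal (32 * vB / r) :=
          ENNReal.ofReal_le_ofReal (le_of_eq (by field_simp; ring))
  refine le_trans key ?_
  have h16 : (0:ℝ) ≤ 16 * vB / r := div_nonneg (mul_nonneg (by norm_num) vB_nonneg) hr0.le
  have h128 : (0:ℝ) ≤ 128 * vB / r := div_nonneg (mul_nonneg (by norm_num) vB_nonneg) hr0.le
  have h32 : (0:ℝ) ≤ 32 * vB / r := div_nonneg (mul_nonneg (by norm_num) vB_nonneg) hr0.le
  calc (∫⁻ z, ENNReal.ofReal (hA z)) + (∫⁻ z, ENNReal.ofReal (hB z)) +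
        (∫⁻ z, ENNReal.ofReal (hC z)) + (∫⁻ z, ENNReal.ofReal (hD z))
      ≤ ENNReal.ofReal (16 * vB / r) + ENNReal.ofReal (16 * vB / r) +
        ENNReal.ofReal (128 * vB / r) + ENNReal.ofReal (32 * vB / r) :=
        add_le_add (add_le_add (add_le_add bound0 boundB) boundC) boundD
    _ = ENNReal.ofReal (CR / r) := by
        rw [← ENNReal.ofReal_add h16 h16, ← ENNReal.ofReal_add (by linarith) h128,
          ← ENNReal.ofReal_add (by linarith) h32]
        rw [← add_div, ← add_div, ← add_div]
        congr 1
        rw [CR]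
        ring

lemma conv_int (ξ : E3) (hξ : ξ ≠ 0) {p q : E3 → ℂ} (hp : Measurable p) (hq : Measurable q)
    {Mp Mq : ℝ} (hMp : 0 ≤ Mp) (hMq : 0 ≤ Mq)
    (hbp : ∀ᵐ z : E3, ‖p z‖ ≤ Mp * (‖z‖^2)⁻¹) (hbq : ∀ᵐ z : E3, ‖q z‖ ≤ Mq * (‖z‖^2)⁻¹) :
    Integrable (fun z : E3 => p (ξ - z) * q z) ∧
      ‖∫ z : E3, p (ξ - z) * q z‖ ≤ Mp * Mq * CR / ‖ξ‖ := by
  have hr0 : 0 < ‖ξ‖ := norm_pos_iff.2 hξ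
  have hmeas : AEStronglyMeasurable (fun z : E3 => p (ξ - z) * q z) volume :=
    ((hp.comp (measurable_const.sub measurable_id)).mul hq).aestronglyMeasurable
  have hbp' : ∀ᵐ z : E3, ‖p (ξ - z)‖ ≤ Mp * (‖ξ - z‖^2)⁻¹ :=
    (Measure.measurePreserving_sub_left volume
      ξ).quasiMeasurePreserving.tendsto_ae.eventually hbp
  have hlin : ∫⁻ z, ENNReal.ofReal ‖p (ξ - z) * q z‖
      ≤ ENNReal.ofReal (Mp * Mq * CR / ‖ξ‖) := by
    calc ∫⁻ z, ENNReal.ofReal ‖p (ξ - z) * q z‖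
        ≤ ∫⁻ z, ENNReal.ofReal (Mp * Mq) *
            ENNReal.ofReal ((‖ξ - z‖^2)⁻¹ * (‖z‖^2)⁻¹) := by
          refine lintegral_mono_ae ?_
          filter_upwards [hbp', hbq] with z h1 h2
          rw [← ENNReal.ofReal_mul (mul_nonneg hMp hMq)]
          refine ENNReal.ofReal_le_ofReal ?_
          rw [norm_mul]
          calc ‖p (ξ - z)‖ * ‖q z‖ ≤ (Mp * (‖ξ - z‖^2)⁻¹) * (Mq * (‖z‖^2)⁻¹) :=
              mul_le_mul h1 h2 (norm_nonneg _) (by positivity)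
            _ = Mp * Mq * ((‖ξ - z‖^2)⁻¹ * (‖z‖^2)⁻¹) := by ring
      _ = ENNReal.ofReal (Mp * Mq) * ∫⁻ z, ENNReal.ofReal ((‖ξ - z‖^2)⁻¹ * (‖z‖^2)⁻¹) :=
          lintegral_const_mul' _ _ ENNReal.ofReal_ne_top
      _ ≤ ENNReal.ofReal (Mp * Mq) * ENNReal.ofReal (CR / ‖ξ‖) := by
          gcongr
          exact riesz ξ hξ
      _ = ENNReal.ofReal (Mp * Mq * CR / ‖ξ‖) := by
          rw [← ENNReal.ofReal_mul (mul_nonneg hMp hMq), mul_div_assoc]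
  have hint : Integrable (fun z : E3 => p (ξ - z) * q z) := by
    refine ⟨hmeas, ?_⟩
    rw [hasFiniteIntegral_iff_norm]
    exact lt_of_le_of_lt hlin ENNReal.ofReal_lt_top
  refine ⟨hint, ?_⟩
  calc ‖∫ z : E3, p (ξ - z) * q z‖
      ≤ (∫⁻ z, ENNReal.ofReal ‖p (ξ - z) * q z‖).toReal :=
        norm_integral_le_lintegral_norm _
    _ ≤ (ENNReal.ofReal (Mp * Mq * CR / ‖ξ‖)).toReal :=
        ENNReal.toReal_mono ENNReal.ofReal_ne_top hlin
    _ ≤ Mp * Mq * CR / ‖ξ‖ := by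
        rw [ENNReal.toReal_ofReal
          (div_nonneg (mul_nonneg (mul_nonneg hMp hMq) CR_nonneg) hr0.le)]

lemma coord_le_norm (ξ : E3) (k : Fin 3) : |ξ k| ≤ ‖ξ‖ := by
  rw [EuclideanSpace.norm_eq]
  have h1 : |ξ k| = Real.sqrt (‖ξ k‖ ^ 2) := by
    rw [Real.sqrt_sq_eq_abs, abs_norm, Real.norm_eq_abs]
  rw [h1]
  exact Real.sqrt_le_sqrt (Finset.single_le_sum
    (f := fun i => ‖ξ i‖ ^ 2) (fun i _ => sq_nonneg _) (Finset.mem_univ k))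

lemma leray_entry_le (ξ : E3) (j k : Fin 3) : ‖LerayP ξ j k‖ ≤ 2 := by
  rw [LerayP]
  refine le_trans (norm_sub_le _ _) ?_
  have h1 : ‖if j = k then (1:ℂ) else 0‖ ≤ 1 := by
    split <;> simp
  have h2 : ‖((ξ j : ℂ) * (ξ k : ℂ)) / ((‖ξ‖ : ℂ) ^ 2)‖ ≤ 1 := by
    rcases eq_or_ne ξ 0 with rfl | hξ
    · simp
    · have hr0 : 0 < ‖ξ‖ := norm_pos_iff.2 hξ
      rw [norm_div, norm_mul, norm_pow, Complex.norm_real, Complex.norm_real,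
        Complex.norm_real, norm_norm]
      rw [div_le_one (by positivity)]
      calc ‖ξ j‖ * ‖ξ k‖ ≤ ‖ξ‖ * ‖ξ‖ := by
            refine mul_le_mul ?_ ?_ (norm_nonneg _) (norm_nonneg _) <;>
              simpa [Real.norm_eq_abs] using coord_le_norm ξ _
        _ = ‖ξ‖ ^ 2 := (sq ‖ξ‖).symm
  linarith

lemma mulVec_norm_le (ξ : E3) (w : V3) : ‖(LerayP ξ).mulVec w‖ ≤ 6 * ‖w‖ := by
  rw [pi_norm_le_iff_of_nonneg (by positivity)]
  intro j
  have : (LerayP ξ).mulVec w j = ∑ k : Fin 3, LerayP ξ j k * w k := by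
    simp [Matrix.mulVec, dotProduct]
  rw [this]
  calc ‖∑ k : Fin 3, LerayP ξ j k * w k‖ ≤ ∑ k : Fin 3, ‖LerayP ξ j k * w k‖ :=
        norm_sum_le _ _
    _ ≤ ∑ _k : Fin 3, 2 * ‖w‖ := by
        refine Finset.sum_le_sum fun k _ => ?_
        rw [norm_mul]
        exact mul_le_mul (leray_entry_le ξ j k) (norm_le_pi_norm w k)
          (norm_nonneg _) (by norm_num)
    _ = 6 * ‖w‖ := by simp [Finset.sum_const]; ring

lemma core_bound (U V : E3 → V3) (hU : Measurable U) (hV : Measurable V)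
    {MU MV d : ℝ} (hMU : 0 ≤ MU) (hMV : 0 ≤ MV) (hd : 0 ≤ d)
    (hbU : ∀ᵐ z : E3, ‖U z‖ ≤ MU * (‖z‖^2)⁻¹)
    (hbV : ∀ᵐ z : E3, ‖V z‖ ≤ MV * (‖z‖^2)⁻¹)
    (hbd : ∀ᵐ z : E3, ‖U z - V z‖ ≤ d * (‖z‖^2)⁻¹)
    (ξ : E3) (hξ : ξ ≠ 0) :
    ‖(LerayP ξ).mulVec (ixW U U ξ - ixW V V ξ)‖ ≤ 18 * CR * ((MU + MV) * d) := by
  have hr0 : 0 < ‖ξ‖ := norm_pos_iff.2 hξ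
  have hUj : ∀ j : Fin 3, Measurable fun z => U z j :=
    fun j => (measurable_pi_apply j).comp hU
  have hVj : ∀ j : Fin 3, Measurable fun z => V z j :=
    fun j => (measurable_pi_apply j).comp hV
  have hWj : ∀ j : Fin 3, Measurable fun z => U z j - V z j :=
    fun j => (hUj j).sub (hVj j)
  have hbUj : ∀ j : Fin 3, ∀ᵐ z : E3, ‖U z j‖ ≤ MU * (‖z‖^2)⁻¹ := by
    intro j; filter_upwards [hbU] with z hz; exact le_trans (norm_le_pi_norm _ j) hz
  have hbVj : ∀ j : Fin 3, ∀ᵐ z : E3, ‖V z j‖ ≤ MV * (‖z‖^2)⁻¹ := by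
    intro j; filter_upwards [hbV] with z hz; exact le_trans (norm_le_pi_norm _ j) hz
  have hbWj : ∀ j : Fin 3, ∀ᵐ z : E3, ‖U z j - V z j‖ ≤ d * (‖z‖^2)⁻¹ := by
    intro j
    filter_upwards [hbd] with z hz
    exact le_trans (by simpa using norm_le_pi_norm (U z - V z) j) hz
  -- W entry bound
  have hWdiff : ∀ j k : Fin 3,
      ‖Wconv U U ξ j k - Wconv V V ξ j k‖ ≤ (MU + MV) * d * CR / ‖ξ‖ := by
    intro j k
    obtain ⟨hIuu, _⟩ := conv_int ξ hξ (hUj j) (hUj k) hMU hMU (hbUj j) (hbUj k)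
    obtain ⟨hIvv, _⟩ := conv_int ξ hξ (hVj j) (hVj k) hMV hMV (hbVj j) (hbVj k)
    obtain ⟨hIwu, hBwu⟩ := conv_int ξ hξ (hWj j) (hUj k) hd hMU (hbWj j) (hbUj k)
    obtain ⟨hIvw, hBvw⟩ := conv_int ξ hξ (hVj j) (hWj k) hMV hd (hbVj j) (hbWj k)
    have hsplit : (∫ z : E3, U (ξ - z) j * U z k) - ∫ z : E3, V (ξ - z) j * V z k
        = (∫ z : E3, (U (ξ - z) j - V (ξ - z) j) * U z k) +
          ∫ z : E3, V (ξ - z) j * (U z k - V z k) := by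
      rw [← integral_add hIwu hIvw, ← integral_sub hIuu hIvv]
      congr 1
      funext z
      ring
    have c0nonneg : (0:ℝ) ≤ (((2 * Real.pi) ^ ((3 : ℝ) / 2))⁻¹ : ℝ) := by positivity
    have c0le : (((2 * Real.pi) ^ ((3 : ℝ) / 2))⁻¹ : ℝ) ≤ 1 := by
      rw [inv_le_one_iff₀]
      right
      exact Real.one_le_rpow (by linarith [Real.pi_gt_three]) (by norm_num)
    have : Wconv U U ξ j k - Wconv V V ξ j k =
        (((2 * Real.pi) ^ ((3 : ℝ) / 2))⁻¹ : ℝ) •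
          (((∫ z : E3, (U (ξ - z) j - V (ξ - z) j) * U z k) +
            ∫ z : E3, V (ξ - z) j * (U z k - V z k))) := by
      rw [Wconv, Wconv, ← smul_sub, hsplit]
    rw [this, norm_smul, Real.norm_eq_abs, abs_of_nonneg c0nonneg]
    calc (((2 * Real.pi) ^ ((3 : ℝ) / 2))⁻¹ : ℝ) * ‖_‖
        ≤ 1 * ((d * MU * CR / ‖ξ‖) + (MV * d * CR / ‖ξ‖)) := by
          refine mul_le_mul c0le (le_trans (norm_add_le _ _) (add_le_add hBwu hBvw))
            (norm_nonneg _) (by norm_num)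
      _ = (MU + MV) * d * CR / ‖ξ‖ := by ring
  -- ixW difference bound
  have hixW : ‖ixW U U ξ - ixW V V ξ‖ ≤ 3 * ((MU + MV) * d * CR) := by
    have hWnonneg : (0:ℝ) ≤ (MU + MV) * d * CR :=
      mul_nonneg (mul_nonneg (by linarith) hd) CR_nonneg
    rw [pi_norm_le_iff_of_nonneg (by positivity)]
    intro j
    have hj : (ixW U U ξ - ixW V V ξ) j =
        ∑ k : Fin 3, Complex.I * (ξ k : ℂ) * (Wconv U U ξ j k - Wconv V V ξ j k) := by
      simp [ixW, Finset.sum_sub_distrib, mul_sub]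
    rw [hj]
    calc ‖∑ k : Fin 3, Complex.I * (ξ k : ℂ) * (Wconv U U ξ j k - Wconv V V ξ j k)‖
        ≤ ∑ k : Fin 3, ‖Complex.I * (ξ k : ℂ) * (Wconv U U ξ j k - Wconv V V ξ j k)‖ :=
          norm_sum_le _ _
      _ ≤ ∑ _k : Fin 3, (MU + MV) * d * CR := by
          refine Finset.sum_le_sum fun k _ => ?_
          rw [norm_mul, norm_mul, Complex.norm_I, one_mul, Complex.norm_real]
          calc ‖ξ k‖ * ‖Wconv U U ξ j k - Wconv V V ξ j k‖
              ≤ ‖ξ‖ * ((MU + MV) * d * CR / ‖ξ‖) := by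
                refine mul_le_mul ?_ (hWdiff j k) (norm_nonneg _) (norm_nonneg _)
                simpa [Real.norm_eq_abs] using coord_le_norm ξ k
            _ = (MU + MV) * d * CR := by field_simp
      _ = 3 * ((MU + MV) * d * CR) := by
          rw [Finset.sum_const, Finset.card_univ, Fintype.card_fin, nsmul_eq_mul]
          norm_num
  calc ‖(LerayP ξ).mulVec (ixW U U ξ - ixW V V ξ)‖
      ≤ 6 * ‖ixW U U ξ - ixW V V ξ‖ := mulVec_norm_le _ _
    _ ≤ 6 * (3 * ((MU + MV) * d * CR)) := by
        refine mul_le_mul_of_nonneg_left hixW (by norm_num)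
    _ = 18 * CR * ((MU + MV) * d) := by ring

lemma rpow_two_norm (ξ : E3) : ‖ξ‖ ^ (2:ℝ) = ‖ξ‖ ^ (2:ℕ) := by
  rw [show (2:ℝ) = ((2:ℕ):ℝ) by norm_num, Real.rpow_natCast]

lemma ae_ne_zero : ∀ᵐ ξ : E3, ξ ≠ 0 := by
  have h : ({0} : Set E3) = {ξ : E3 | ¬ ξ ≠ 0} := by ext ζ; simp
  rw [ae_iff, ← h]
  exact measure_singleton 0

lemma pm_ae_bound (g : E3 → V3) (h : PMnorm 2 g ≠ ⊤) :
    ∀ᵐ z : E3, ‖g z‖ ≤ (PMnorm 2 g).toReal * (‖z‖^2)⁻¹ := by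
  have h1 : ∀ᵐ z : E3, ENNReal.ofReal (‖z‖ ^ (2:ℝ) * ‖g z‖) ≤ PMnorm 2 g :=
    ENNReal.ae_le_essSup _
  filter_upwards [h1, ae_ne_zero] with z hz h0
  have hpos : (0:ℝ) < ‖z‖ ^ 2 := by
    have : 0 < ‖z‖ := norm_pos_iff.2 h0
    positivity
  have h2 : ‖z‖ ^ 2 * ‖g z‖ ≤ (PMnorm 2 g).toReal := by
    rw [← rpow_two_norm z]
    exact (ENNReal.ofReal_le_iff_le_toReal h).1 hz
  rw [mul_comm, ← div_eq_inv_mul, le_div_iff₀ hpos]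
  linarith [h2]
lemma pm_le_of_ae (g : E3 → V3) (c : ℝ) (h : ∀ᵐ ξ : E3, ‖ξ‖^2 * ‖g ξ‖ ≤ c) :
    PMnorm 2 g ≤ ENNReal.ofReal c := by
  refine essSup_le_of_ae_le _ ?_
  filter_upwards [h] with ξ hξ
  exact ENNReal.ofReal_le_ofReal (by rwa [rpow_two_norm])

lemma pm_le_add (f g h : E3 → V3) (hpt : ∀ ξ, ‖h ξ‖ ≤ ‖f ξ‖ + ‖g ξ‖) :
    PMnorm 2 h ≤ PMnorm 2 f + PMnorm 2 g := by
  refine essSup_le_of_ae_le _ ?_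
  filter_upwards [ENNReal.ae_le_essSup (fun ξ : E3 => ENNReal.ofReal (‖ξ‖ ^ (2:ℝ) * ‖f ξ‖)),
    ENNReal.ae_le_essSup (fun ξ : E3 => ENNReal.ofReal (‖ξ‖ ^ (2:ℝ) * ‖g ξ‖))] with ξ h1 h2
  calc ENNReal.ofReal (‖ξ‖ ^ (2:ℝ) * ‖h ξ‖)
      ≤ ENNReal.ofReal (‖ξ‖ ^ (2:ℝ) * ‖f ξ‖ + ‖ξ‖ ^ (2:ℝ) * ‖g ξ‖) := by
        refine ENNReal.ofReal_le_ofReal ?_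
        rw [← mul_add]
        refine mul_le_mul_of_nonneg_left (hpt ξ) ?_
        positivity
    _ ≤ ENNReal.ofReal (‖ξ‖ ^ (2:ℝ) * ‖f ξ‖) + ENNReal.ofReal (‖ξ‖ ^ (2:ℝ) * ‖g ξ‖) :=
        ENNReal.ofReal_add_le
    _ ≤ PMnorm 2 f + PMnorm 2 g := add_le_add h1 h2

lemma xexp_le_one (x : ℝ) : x * Real.exp (-x) ≤ 1 := by
  rw [Real.exp_neg, mul_comm, inv_mul_le_iff₀ (Real.exp_pos x), mul_one]
  linarith [Real.add_one_le_exp x]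

end aux

/-- **Necessary condition for asymptotic equivalence of two solutions:** if two
bounded mild solutions satisfy `‖u(t)−v(t)‖_{PM²} → 0`, then
`‖S(t)(u₀−v₀) + ∫₀ᵗ S(t−τ)P(F(τ)−G(τ))dτ‖_{PM²} → 0` as `t → ∞`. -/
theorem asymptotic_stability_necessary
    (u0 v0 : E3 → V3) (F G : E3 → ℝ → V3) (u v : E3 → ℝ → V3)
    (hu : IsMildSolution u0 F u) (hv : IsMildSolution v0 G v)
    (hub : supPM 2 u ≠ ⊤) (hvb : supPM 2 v ≠ ⊤)
    (hconv : Tendsto (fun t : ℝ => PMnorm 2 (fun ξ => u ξ t - v ξ t)) atTop (nhds 0)) :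
    Tendsto (fun t : ℝ =>
        PMnorm 2 (fun ξ => Real.exp (-t * ‖ξ‖ ^ 2) • (u0 ξ - v0 ξ) +
          Fterm (fun ζ τ => F ζ τ - G ζ τ) ξ t)) atTop (nhds 0) := by
  obtain ⟨hum, huid⟩ := hu
  obtain ⟨hvm, hvid⟩ := hv
  set Mu := (supPM 2 u).toReal with hMu
  set Mv := (supPM 2 v).toReal with hMv
  have hMu0 : 0 ≤ Mu := ENNReal.toReal_nonneg
  have hMv0 : 0 ≤ Mv := ENNReal.toReal_nonneg
  have hUmeas : ∀ τ : ℝ, Measurable fun z : E3 => u z τ :=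
    fun τ => hum.comp (measurable_id.prodMk measurable_const)
  have hVmeas : ∀ τ : ℝ, Measurable fun z : E3 => v z τ :=
    fun τ => hvm.comp (measurable_id.prodMk measurable_const)
  have hpmu : ∀ τ : ℝ, 0 ≤ τ → PMnorm 2 (fun z => u z τ) ≤ supPM 2 u := fun τ hτ =>
    le_iSup₂ (f := fun (s : ℝ) (_ : 0 ≤ s) => PMnorm 2 fun ξ => u ξ s) τ hτ
  have hpmv : ∀ τ : ℝ, 0 ≤ τ → PMnorm 2 (fun z => v z τ) ≤ supPM 2 v := fun τ hτ =>
    le_iSup₂ (f := fun (s : ℝ) (_ : 0 ≤ s) => PMnorm 2 fun ξ => v ξ s) τ hτ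
  have hbu : ∀ τ : ℝ, 0 ≤ τ → ∀ᵐ z : E3, ‖u z τ‖ ≤ Mu * (‖z‖ ^ 2)⁻¹ := by
    intro τ hτ
    have hne : PMnorm 2 (fun z => u z τ) ≠ ⊤ := ne_top_of_le_ne_top hub (hpmu τ hτ)
    filter_upwards [pm_ae_bound _ hne] with z hz
    exact hz.trans (mul_le_mul_of_nonneg_right
      (ENNReal.toReal_mono hub (hpmu τ hτ)) (by positivity))
  have hbv : ∀ τ : ℝ, 0 ≤ τ → ∀ᵐ z : E3, ‖v z τ‖ ≤ Mv * (‖z‖ ^ 2)⁻¹ := by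
    intro τ hτ
    have hne : PMnorm 2 (fun z => v z τ) ≠ ⊤ := ne_top_of_le_ne_top hvb (hpmv τ hτ)
    filter_upwards [pm_ae_bound _ hne] with z hz
    exact hz.trans (mul_le_mul_of_nonneg_right
      (ENNReal.toReal_mono hvb (hpmv τ hτ)) (by positivity))
  set D : ℝ → ℝ := fun τ => (PMnorm 2 fun z => u z τ - v z τ).toReal with hDdef
  have hD0 : ∀ τ, 0 ≤ D τ := fun τ => ENNReal.toReal_nonneg
  have hsum_ne : supPM 2 u + supPM 2 v ≠ ⊤ := ENNReal.add_ne_top.2 ⟨hub, hvb⟩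
  have hpmd : ∀ τ : ℝ, 0 ≤ τ →
      PMnorm 2 (fun z => u z τ - v z τ) ≤ supPM 2 u + supPM 2 v := by
    intro τ hτ
    refine le_trans (pm_le_add (fun z => u z τ) (fun z => v z τ) _
      (fun ξ => norm_sub_le _ _)) ?_
    exact add_le_add (hpmu τ hτ) (hpmv τ hτ)
  have hDle : ∀ τ : ℝ, 0 ≤ τ → D τ ≤ Mu + Mv := by
    intro τ hτ
    have h1 := ENNReal.toReal_mono hsum_ne (hpmd τ hτ)
    rwa [ENNReal.toReal_add hub hvb] at h1
  have hbd : ∀ τ : ℝ, 0 ≤ τ → ∀ᵐ z : E3, ‖u z τ - v z τ‖ ≤ D τ * (‖z‖ ^ 2)⁻¹ := by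
    intro τ hτ
    exact pm_ae_bound _ (ne_top_of_le_ne_top hsum_ne (hpmd τ hτ))
  have hDtend : Tendsto D atTop (nhds 0) := by
    have h1 := (ENNReal.tendsto_toReal (show (0:ℝ≥0∞) ≠ ⊤ by simp)).comp hconv
    rw [ENNReal.toReal_zero] at h1
    exact h1
  set K := 18 * CR * (Mu + Mv) with hK
  have hK0 : 0 ≤ K := mul_nonneg (mul_nonneg (by norm_num) CR_nonneg) (by linarith)
  have hcore : ∀ τ : ℝ, 0 ≤ τ → ∀ ξ : E3, ξ ≠ 0 →
      ‖(LerayP ξ).mulVec (ixW (fun ζ => u ζ τ) (fun ζ => u ζ τ) ξ -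
        ixW (fun ζ => v ζ τ) (fun ζ => v ζ τ) ξ)‖ ≤ K * D τ := by
    intro τ hτ ξ hξ
    have h := core_bound (fun z => u z τ) (fun z => v z τ) (hUmeas τ) (hVmeas τ)
      hMu0 hMv0 (hD0 τ) (hbu τ hτ) (hbv τ hτ) (hbd τ hτ) ξ hξ
    calc ‖(LerayP ξ).mulVec (ixW (fun ζ => u ζ τ) (fun ζ => u ζ τ) ξ -
          ixW (fun ζ => v ζ τ) (fun ζ => v ζ τ) ξ)‖
        ≤ 18 * CR * ((Mu + Mv) * D τ) := h
      _ = K * D τ := by rw [hK]; ring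
  -- the identity for the target function
  have hident : ∀ t : ℝ, 0 ≤ t → ∀ᵐ ξ : E3,
      Real.exp (-t * ‖ξ‖ ^ 2) • (u0 ξ - v0 ξ) +
        Fterm (fun ζ τ => F ζ τ - G ζ τ) ξ t
      = (u ξ t - v ξ t) + (Bterm u u ξ t - Bterm v v ξ t) := by
    intro t ht
    filter_upwards [huid t ht, hvid t ht] with ξ hU hV
    obtain ⟨_, hIBu, hIFu, hidu⟩ := hU
    obtain ⟨_, hIBv, hIFv, hidv⟩ := hV
    have hFsub : Fterm (fun ζ τ => F ζ τ - G ζ τ) ξ t = Fterm F ξ t - Fterm G ξ t := by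
      rw [Fterm, Fterm, Fterm, ← intervalIntegral.integral_sub hIFu hIFv]
      refine intervalIntegral.integral_congr fun τ _ => ?_
      rw [Matrix.mulVec_sub, smul_sub]
    rw [hFsub, hidu, hidv, smul_sub]
    abel
  -- the decay of the bilinear difference term
  have hB : ∀ δ : ℝ, 0 < δ → ∀ᶠ t in atTop, ∀ᵐ ξ : E3,
      ‖ξ‖ ^ 2 * ‖Bterm u u ξ t - Bterm v v ξ t‖ ≤ δ := by
    intro δ hδ
    obtain ⟨T₀, hT₀⟩ := (Metric.tendsto_atTop.1 hDtend) (δ / (2 * (K + 1)))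
      (by positivity)
    set T := max T₀ 0 with hT
    have hT0 : 0 ≤ T := le_max_right _ _
    have hTK : ∀ τ : ℝ, T ≤ τ → K * D τ ≤ δ / 2 := by
      intro τ hτ
      have h1 := hT₀ τ (le_trans (le_max_left _ _) hτ)
      rw [Real.dist_eq, sub_zero, abs_of_nonneg (hD0 τ)] at h1
      refine (mul_le_mul_of_nonneg_left h1.le hK0).trans ?_
      rw [mul_div_assoc', div_le_div_iff₀ (by linarith) (by norm_num)]
      nlinarith
    set A := K * (Mu + Mv) * T with hA
    have hA0 : 0 ≤ A := mul_nonneg (mul_nonneg hK0 (by linarith)) hT0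
    filter_upwards [eventually_ge_atTop (T + 1), eventually_ge_atTop (T + 2 * (A + 1) / δ)]
      with t ht1 ht2
    have htT : 0 < t - T := by linarith
    have ht0 : 0 ≤ t := by linarith
    have hTt : T ≤ t := by linarith
    have hTmem : T ∈ Set.Icc 0 t := ⟨hT0, hTt⟩
    have hfirst : A / (t - T) ≤ δ / 2 := by
      rw [div_le_iff₀ htT]
      nlinarith [mul_le_mul_of_nonneg_left
        (show 2 * (A + 1) / δ ≤ t - T by linarith) (le_of_lt (half_pos hδ)),
        mul_div_cancel₀ (2 * (A + 1)) hδ.ne']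
    filter_upwards [huid t ht0, hvid t ht0, ae_ne_zero] with ξ hU hV hξ0
    obtain ⟨_, hIu, -, -⟩ := hU
    obtain ⟨_, hIv, -, -⟩ := hV
    have hr0 : 0 < ‖ξ‖ := norm_pos_iff.2 hξ0
    set gu : ℝ → V3 := fun τ => Real.exp (-(t - τ) * ‖ξ‖ ^ 2) •
      (LerayP ξ).mulVec (ixW (fun ζ => u ζ τ) (fun ζ => u ζ τ) ξ) with hgu
    set gv : ℝ → V3 := fun τ => Real.exp (-(t - τ) * ‖ξ‖ ^ 2) •
      (LerayP ξ).mulVec (ixW (fun ζ => v ζ τ) (fun ζ => v ζ τ) ξ) with hgv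
    have hIgd : IntervalIntegrable (fun τ => gu τ - gv τ) volume 0 t := hIu.sub hIv
    have hBd : Bterm u u ξ t - Bterm v v ξ t = ∫ τ in (0:ℝ)..t, (gu τ - gv τ) :=
      (intervalIntegral.integral_sub hIu hIv).symm
    have hsub1 : Set.uIcc (0:ℝ) T ⊆ Set.uIcc (0:ℝ) t :=
      Set.uIcc_subset_uIcc Set.left_mem_uIcc (by rw [Set.uIcc_of_le ht0]; exact hTmem)
    have hsub2 : Set.uIcc T t ⊆ Set.uIcc (0:ℝ) t :=
      Set.uIcc_subset_uIcc (by rw [Set.uIcc_of_le ht0]; exact hTmem)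
        (by rw [Set.uIcc_of_le ht0]; exact Set.right_mem_Icc.2 ht0)
    have hsplit : ∫ τ in (0:ℝ)..t, (gu τ - gv τ) =
        (∫ τ in (0:ℝ)..T, (gu τ - gv τ)) + ∫ τ in T..t, (gu τ - gv τ) :=
      (intervalIntegral.integral_add_adjacent_intervals (hIgd.mono_set hsub1)
        (hIgd.mono_set hsub2)).symm
    have hgd_eq : ∀ τ : ℝ, gu τ - gv τ = Real.exp (-(t - τ) * ‖ξ‖ ^ 2) •
        (LerayP ξ).mulVec (ixW (fun ζ => u ζ τ) (fun ζ => u ζ τ) ξ -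
          ixW (fun ζ => v ζ τ) (fun ζ => v ζ τ) ξ) := by
      intro τ
      rw [hgu, hgv, Matrix.mulVec_sub, smul_sub]
    have hgd_norm : ∀ τ : ℝ, 0 ≤ τ →
        ‖gu τ - gv τ‖ ≤ Real.exp (-(t - τ) * ‖ξ‖ ^ 2) * (K * D τ) := by
      intro τ hτ
      rw [hgd_eq τ, norm_smul, Real.norm_eq_abs, abs_of_pos (Real.exp_pos _)]
      exact mul_le_mul_of_nonneg_left (hcore τ hτ ξ hξ0) (Real.exp_pos _).le
    have hP1 : ‖∫ τ in (0:ℝ)..T, (gu τ - gv τ)‖ ≤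
        (K * (Mu + Mv)) * (T * Real.exp (-(t - T) * ‖ξ‖ ^ 2)) := by
      have hb : ∀ᵐ τ ∂(volume.restrict (Set.uIoc (0:ℝ) T)),
          ‖gu τ - gv τ‖ ≤ Real.exp (-(t - τ) * ‖ξ‖ ^ 2) * (K * (Mu + Mv)) := by
        filter_upwards [ae_restrict_mem measurableSet_uIoc] with τ hτ
        rw [Set.uIoc_of_le hT0] at hτ
        refine (hgd_norm τ hτ.1.le).trans ?_
        refine mul_le_mul_of_nonneg_left ?_ (Real.exp_pos _).le
        exact mul_le_mul_of_nonneg_left (hDle τ hτ.1.le) hK0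
      have hgint : IntervalIntegrable
          (fun τ => Real.exp (-(t - τ) * ‖ξ‖ ^ 2) * (K * (Mu + Mv))) volume 0 T :=
        ((by fun_prop : Continuous fun τ : ℝ =>
          Real.exp (-(t - τ) * ‖ξ‖ ^ 2) * (K * (Mu + Mv)))).intervalIntegrable _ _
      refine (intervalIntegral.norm_integral_le_abs_of_norm_le hb hgint).trans ?_
      rw [abs_of_nonneg (intervalIntegral.integral_nonneg hT0
        (fun τ _ => mul_nonneg (Real.exp_pos _).le (mul_nonneg hK0 (by linarith))))]
      have hgint2 : IntervalIntegrable
          (fun _ : ℝ => Real.exp (-(t - T) * ‖ξ‖ ^ 2) * (K * (Mu + Mv))) volume 0 T :=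
        intervalIntegrable_const
      have hmono : ∀ τ ∈ Set.Icc (0:ℝ) T,
          Real.exp (-(t - τ) * ‖ξ‖ ^ 2) * (K * (Mu + Mv)) ≤
          Real.exp (-(t - T) * ‖ξ‖ ^ 2) * (K * (Mu + Mv)) := by
        intro τ hτ
        refine mul_le_mul_of_nonneg_right (Real.exp_le_exp.2 ?_)
          (mul_nonneg hK0 (by linarith))
        nlinarith [sq_nonneg ‖ξ‖, hτ.2]
      calc ∫ τ in (0:ℝ)..T, Real.exp (-(t - τ) * ‖ξ‖ ^ 2) * (K * (Mu + Mv))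
          ≤ ∫ _ in (0:ℝ)..T, Real.exp (-(t - T) * ‖ξ‖ ^ 2) * (K * (Mu + Mv)) :=
            intervalIntegral.integral_mono_on hT0 hgint hgint2 hmono
        _ = (K * (Mu + Mv)) * (T * Real.exp (-(t - T) * ‖ξ‖ ^ 2)) := by
            rw [intervalIntegral.integral_const, smul_eq_mul]
            ring
    have hP2 : ‖∫ τ in T..t, (gu τ - gv τ)‖ ≤
        (δ / 2) * ∫ τ in T..t, Real.exp (-(t - τ) * ‖ξ‖ ^ 2) := by
      have hb : ∀ᵐ τ ∂(volume.restrict (Set.uIoc T t)),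
          ‖gu τ - gv τ‖ ≤ Real.exp (-(t - τ) * ‖ξ‖ ^ 2) * (δ / 2) := by
        filter_upwards [ae_restrict_mem measurableSet_uIoc] with τ hτ
        rw [Set.uIoc_of_le hTt] at hτ
        refine (hgd_norm τ (le_trans hT0 hτ.1.le)).trans ?_
        exact mul_le_mul_of_nonneg_left (hTK τ hτ.1.le) (Real.exp_pos _).le
      have hgint : IntervalIntegrable
          (fun τ => Real.exp (-(t - τ) * ‖ξ‖ ^ 2) * (δ / 2)) volume T t :=
        ((by fun_prop : Continuous fun τ : ℝ =>
          Real.exp (-(t - τ) * ‖ξ‖ ^ 2) * (δ / 2))).intervalIntegrable _ _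
      refine (intervalIntegral.norm_integral_le_abs_of_norm_le hb hgint).trans ?_
      rw [abs_of_nonneg (intervalIntegral.integral_nonneg hTt
        (fun τ _ => mul_nonneg (Real.exp_pos _).le (by linarith)))]
      rw [intervalIntegral.integral_mul_const]
      exact le_of_eq (mul_comm _ _)
    have hexp2 : ‖ξ‖ ^ 2 * ∫ τ in T..t, Real.exp (-(t - τ) * ‖ξ‖ ^ 2) ≤ 1 := by
      have hderiv : ∀ τ ∈ Set.uIcc T t, HasDerivAt (fun s => Real.exp ((s - t) * ‖ξ‖ ^ 2))
          (Real.exp ((τ - t) * ‖ξ‖ ^ 2) * ‖ξ‖ ^ 2) τ := by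
        intro τ _
        have h1 : HasDerivAt (fun s : ℝ => (s - t) * ‖ξ‖ ^ 2) (‖ξ‖ ^ 2) τ := by
          simpa using ((hasDerivAt_id τ).sub_const t).mul_const (‖ξ‖ ^ 2)
        exact h1.exp
      have hInt : ∫ τ in T..t, Real.exp ((τ - t) * ‖ξ‖ ^ 2) * ‖ξ‖ ^ 2 =
          Real.exp ((t - t) * ‖ξ‖ ^ 2) - Real.exp ((T - t) * ‖ξ‖ ^ 2) :=
        intervalIntegral.integral_eq_sub_of_hasDerivAt hderiv
          (((by fun_prop : Continuous fun τ : ℝ =>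
            Real.exp ((τ - t) * ‖ξ‖ ^ 2) * ‖ξ‖ ^ 2)).intervalIntegrable _ _)
      have hcong : (∫ τ in T..t, Real.exp (-(t - τ) * ‖ξ‖ ^ 2)) =
          ∫ τ in T..t, Real.exp ((τ - t) * ‖ξ‖ ^ 2) :=
        intervalIntegral.integral_congr fun τ _ => by ring_nf
      rw [hcong, mul_comm, ← intervalIntegral.integral_mul_const, hInt]
      have : Real.exp ((T - t) * ‖ξ‖ ^ 2) > 0 := Real.exp_pos _
      simp only [sub_self, zero_mul, Real.exp_zero]
      linarith
    have hterm1 : ‖ξ‖ ^ 2 * ((K * (Mu + Mv)) * (T * Real.exp (-(t - T) * ‖ξ‖ ^ 2)))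
        ≤ δ / 2 := by
      have hxe := xexp_le_one ((t - T) * ‖ξ‖ ^ 2)
      have h6 : ‖ξ‖ ^ 2 * Real.exp (-(t - T) * ‖ξ‖ ^ 2) ≤ 1 / (t - T) := by
        rw [le_div_iff₀ htT]
        calc ‖ξ‖ ^ 2 * Real.exp (-(t - T) * ‖ξ‖ ^ 2) * (t - T)
            = ((t - T) * ‖ξ‖ ^ 2) * Real.exp (-((t - T) * ‖ξ‖ ^ 2)) := by ring_nf
          _ ≤ 1 := hxe
      calc ‖ξ‖ ^ 2 * ((K * (Mu + Mv)) * (T * Real.exp (-(t - T) * ‖ξ‖ ^ 2)))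
          = A * (‖ξ‖ ^ 2 * Real.exp (-(t - T) * ‖ξ‖ ^ 2)) := by rw [hA]; ring
        _ ≤ A * (1 / (t - T)) := mul_le_mul_of_nonneg_left h6 hA0
        _ = A / (t - T) := by ring
        _ ≤ δ / 2 := hfirst
    have hterm2 : ‖ξ‖ ^ 2 * ((δ / 2) * ∫ τ in T..t, Real.exp (-(t - τ) * ‖ξ‖ ^ 2))
        ≤ δ / 2 := by
      calc ‖ξ‖ ^ 2 * ((δ / 2) * ∫ τ in T..t, Real.exp (-(t - τ) * ‖ξ‖ ^ 2))
          = (δ / 2) * (‖ξ‖ ^ 2 * ∫ τ in T..t, Real.exp (-(t - τ) * ‖ξ‖ ^ 2)) := by ring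
        _ ≤ (δ / 2) * 1 := mul_le_mul_of_nonneg_left hexp2 (by linarith)
        _ = δ / 2 := mul_one _
    calc ‖ξ‖ ^ 2 * ‖Bterm u u ξ t - Bterm v v ξ t‖
        = ‖ξ‖ ^ 2 * ‖(∫ τ in (0:ℝ)..T, (gu τ - gv τ)) + ∫ τ in T..t, (gu τ - gv τ)‖ := by
          rw [hBd, hsplit]
      _ ≤ ‖ξ‖ ^ 2 * (‖∫ τ in (0:ℝ)..T, (gu τ - gv τ)‖ + ‖∫ τ in T..t, (gu τ - gv τ)‖) :=
          mul_le_mul_of_nonneg_left (norm_add_le _ _) (by positivity)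
      _ = ‖ξ‖ ^ 2 * ‖∫ τ in (0:ℝ)..T, (gu τ - gv τ)‖ +
          ‖ξ‖ ^ 2 * ‖∫ τ in T..t, (gu τ - gv τ)‖ := by ring
      _ ≤ ‖ξ‖ ^ 2 * ((K * (Mu + Mv)) * (T * Real.exp (-(t - T) * ‖ξ‖ ^ 2))) +
          ‖ξ‖ ^ 2 * ((δ / 2) * ∫ τ in T..t, Real.exp (-(t - τ) * ‖ξ‖ ^ 2)) :=
          add_le_add (mul_le_mul_of_nonneg_left hP1 (by positivity))
            (mul_le_mul_of_nonneg_left hP2 (by positivity))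
      _ ≤ δ / 2 + δ / 2 := add_le_add hterm1 hterm2
      _ = δ := by ring
  -- final assembly
  rw [ENNReal.tendsto_nhds_zero]
  intro ε hε
  obtain ⟨δ, hδ0, hδε⟩ : ∃ δ : ℝ, 0 < δ ∧ ENNReal.ofReal δ ≤ ε / 2 := by
    rcases eq_or_ne (ε / 2) ⊤ with h | h
    · exact ⟨1, one_pos, by rw [h]; exact le_top⟩
    · have hpos : (0:ℝ≥0∞) < ε / 2 := ENNReal.half_pos hε.ne'
      refine ⟨(ε / 2).toReal, ENNReal.toReal_pos hpos.ne' h, ?_⟩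
      rw [ENNReal.ofReal_toReal h]
  have hE1 : ∀ᶠ t in atTop, PMnorm 2 (fun ξ => u ξ t - v ξ t) ≤ ε / 2 :=
    ENNReal.tendsto_nhds_zero.1 hconv (ε / 2) (ENNReal.half_pos hε.ne')
  filter_upwards [hE1, hB δ hδ0, eventually_ge_atTop (0:ℝ)] with t h1 h2 ht0
  have hmain : PMnorm 2 (fun ξ => Real.exp (-t * ‖ξ‖ ^ 2) • (u0 ξ - v0 ξ) +
      Fterm (fun ζ τ => F ζ τ - G ζ τ) ξ t)
      ≤ PMnorm 2 (fun ξ => u ξ t - v ξ t) + ENNReal.ofReal δ := by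
    refine essSup_le_of_ae_le _ ?_
    filter_upwards [hident t ht0, h2,
      ENNReal.ae_le_essSup (fun ξ : E3 => ENNReal.ofReal (‖ξ‖ ^ (2:ℝ) *
        ‖u ξ t - v ξ t‖))] with ξ hid hBb hled
    calc ENNReal.ofReal (‖ξ‖ ^ (2:ℝ) * ‖Real.exp (-t * ‖ξ‖ ^ 2) • (u0 ξ - v0 ξ) +
            Fterm (fun ζ τ => F ζ τ - G ζ τ) ξ t‖)
        = ENNReal.ofReal (‖ξ‖ ^ (2:ℝ) *
            ‖(u ξ t - v ξ t) + (Bterm u u ξ t - Bterm v v ξ t)‖) := by rw [hid]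
      _ ≤ ENNReal.ofReal (‖ξ‖ ^ (2:ℝ) * ‖u ξ t - v ξ t‖ +
            ‖ξ‖ ^ (2:ℝ) * ‖Bterm u u ξ t - Bterm v v ξ t‖) := by
          refine ENNReal.ofReal_le_ofReal ?_
          rw [← mul_add]
          refine mul_le_mul_of_nonneg_left (norm_add_le _ _) ?_
          positivity
      _ ≤ ENNReal.ofReal (‖ξ‖ ^ (2:ℝ) * ‖u ξ t - v ξ t‖) +
          ENNReal.ofReal (‖ξ‖ ^ (2:ℝ) * ‖Bterm u u ξ t - Bterm v v ξ t‖) :=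
          ENNReal.ofReal_add_le
      _ ≤ PMnorm 2 (fun ξ => u ξ t - v ξ t) + ENNReal.ofReal δ := by
          refine add_le_add hled ?_
          refine ENNReal.ofReal_le_ofReal ?_
          rwa [rpow_two_norm]
  refine hmain.trans ?_
  calc PMnorm 2 (fun ξ => u ξ t - v ξ t) + ENNReal.ofReal δ
      ≤ ε / 2 + ε / 2 := add_le_add h1 hδε
    _ = ε := ENNReal.add_halves ε
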